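/- For fixed β > 0 and r ≥ 0, the rescaled Matérn correlation M_{ν, β/(2√ν)}(r) = (2^{1−ν}/Γ(ν)) (2√ν r/β)^ν K_ν(2√ν r/β) converges to exp(−r²/β²) as ν → ∞, uniformly on compact subsets of [0,∞). -/

import Mathlib

open Real Filter

/-- Modified Bessel function of the second kind of order `ν`, via its integral
representation for positive argument. -/
noncomputable def besselK (ν x : ℝ) : ℝ :=
  ∫ t in Set.Ioi (0 : ℝ), Real.exp (-x * Real.cosh t) * Real.cosh (ν * t)

/-- The Matérn correlation function with smoothness `ν` and scale `b`. -/
noncomputable def matern (ν b r : ℝ) : ℝ :=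
  if r = 0 then 1
  else 2 ^ (1 - ν) / Real.Gamma ν * (r / b) ^ ν * besselK ν (r / b)

open MeasureTheory Set

lemma exp_subst (ν x : ℝ) :
    (∫ t : ℝ, Real.exp (-x * Real.cosh t) * Real.cosh (ν * t))
      = ∫ s in Ioi (0:ℝ), ((s ^ (ν - 1) + s ^ (-ν - 1))/2) * Real.exp (-(x/2) * (s + 1/s)) := by
  have h := integral_image_eq_integral_abs_deriv_smul (f := Real.exp)
    (f' := Real.exp) MeasurableSet.univ
    (fun t _ => (Real.hasDerivAt_exp t).hasDerivWithinAt)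
    (Real.exp_injective.injOn)
    (fun s => ((s ^ (ν - 1) + s ^ (-ν - 1))/2) * Real.exp (-(x/2) * (s + 1/s)))
  rw [image_univ, Real.range_exp, Measure.restrict_univ] at h
  rw [h]
  refine integral_congr_ae (Eventually.of_forall fun t => ?_)
  dsimp only
  rw [smul_eq_mul, abs_of_pos (Real.exp_pos t)]
  have e1 : Real.exp t ^ (ν - 1) = Real.exp (t * (ν - 1)) := (Real.exp_mul t (ν - 1)).symm
  have e2 : Real.exp t ^ (-ν - 1) = Real.exp (t * (-ν - 1)) := (Real.exp_mul t (-ν - 1)).symm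
  have e3 : (1:ℝ)/Real.exp t = Real.exp (-t) := by rw [one_div, ← Real.exp_neg]
  rw [e1, e2, e3]
  have h4 : -(x/2) * (Real.exp t + Real.exp (-t)) = -x * Real.cosh t := by
    rw [Real.cosh_eq]; ring
  rw [h4]
  have hcosh : Real.exp t * ((Real.exp (t * (ν - 1)) + Real.exp (t * (-ν - 1)))/2)
      = Real.cosh (ν * t) := by
    rw [Real.cosh_eq, ← mul_div_assoc, mul_add, ← Real.exp_add, ← Real.exp_add,
      show t + t * (ν - 1) = ν * t by ring, show t + t * (-ν - 1) = -(ν * t) by ring]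
  linear_combination (-Real.exp (-x * Real.cosh t)) * hcosh

lemma two_besselK (ν x : ℝ) :
    (∫ t : ℝ, Real.exp (-x * Real.cosh t) * Real.cosh (ν * t)) = 2 * besselK ν x := by
  rw [besselK, ← integral_comp_abs (f := fun t => Real.exp (-x * Real.cosh t) * Real.cosh (ν * t))]
  refine integral_congr_ae (Eventually.of_forall fun t => ?_)
  dsimp only
  rcases abs_choice t with h | h <;> rw [h]
  rw [mul_neg, Real.cosh_neg, Real.cosh_neg]

lemma abs_exp_sub_exp {a b : ℝ} (ha : 0 ≤ a) (hb : 0 ≤ b) :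
    |Real.exp (-a) - Real.exp (-b)| ≤ |a - b| := by
  have key : ∀ u v : ℝ, 0 ≤ u → u ≤ v → Real.exp (-u) - Real.exp (-v) ≤ v - u := by
    intro u v hu huv
    have h1 : Real.exp (-u) ≤ 1 := Real.exp_le_one_iff.mpr (by linarith)
    have h2 : -(v - u) + 1 ≤ Real.exp (-(v - u)) := Real.add_one_le_exp _
    have h3 : Real.exp (-u) * Real.exp (-(v - u)) = Real.exp (-v) := by
      rw [← Real.exp_add]; ring_nf
    have h4 := Real.exp_pos (-u)
    nlinarith [mul_le_mul_of_nonneg_left h2 h4.le]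
  rcases le_total a b with h | h
  · have h5 : Real.exp (-b) ≤ Real.exp (-a) := Real.exp_le_exp.mpr (by linarith)
    rw [abs_of_nonneg (by linarith), abs_of_nonpos (by linarith)]
    have := key a b ha h
    linarith
  · have h5 : Real.exp (-a) ≤ Real.exp (-b) := Real.exp_le_exp.mpr (by linarith)
    rw [abs_of_nonpos (by linarith), abs_of_nonneg (by linarith)]
    have := key b a hb h
    linarith

lemma int_gamma {a : ℝ} (ha : 0 < a) :
    IntegrableOn (fun u : ℝ => u ^ (a - 1) * Real.exp (-u)) (Ioi 0) :=
  (Real.GammaIntegral_convergent ha).congr_fun (fun u _ => mul_comm _ _) measurableSet_Ioi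

lemma int_gamma_eq {a : ℝ} (ha : 0 < a) :
    ∫ u in Ioi (0:ℝ), u ^ (a - 1) * Real.exp (-u) = Real.Gamma a := by
  rw [Real.Gamma_eq_integral ha]
  exact setIntegral_congr_fun measurableSet_Ioi fun u _ => mul_comm _ _

lemma cont_s (a x : ℝ) :
    ContinuousOn (fun s : ℝ => s ^ (a - 1) * Real.exp (-(x/2) * (s + 1/s))) (Ioi 0) := by
  refine ContinuousOn.mul ?_ ?_
  · exact continuousOn_id.rpow_const fun s hs => Or.inl (ne_of_gt hs)
  · exact Real.continuous_exp.comp_continuousOn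
      (continuousOn_const.mul (continuousOn_id.add
        (continuousOn_const.div continuousOn_id fun s hs => ne_of_gt hs)))

lemma int_s {a x : ℝ} (ha : 0 < a) (hx : 0 < x) :
    IntegrableOn (fun s : ℝ => s ^ (a - 1) * Real.exp (-(x/2) * (s + 1/s))) (Ioi 0) := by
  have hbase : IntegrableOn (fun s : ℝ => s ^ (a - 1) * Real.exp (-(x/2) * s)) (Ioi 0) := by
    have h := integrableOn_rpow_mul_exp_neg_mul_rpow (s := a - 1) (p := 1) (b := x/2)
      (by linarith) zero_lt_one (by positivity)
    exact h.congr_fun (fun s _ => by simp only [Real.rpow_one]) measurableSet_Ioi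
  refine hbase.mono' ((cont_s a x).aestronglyMeasurable measurableSet_Ioi) ?_
  filter_upwards [ae_restrict_mem measurableSet_Ioi] with s hs
  have hs0 : (0:ℝ) < s := hs
  rw [Real.norm_eq_abs, abs_of_nonneg (by positivity)]
  have h1 : -(x/2) * (s + 1/s) ≤ -(x/2) * s := by
    have : 0 < 1/s := by positivity
    nlinarith
  exact mul_le_mul_of_nonneg_left (Real.exp_le_exp.mpr h1) (Real.rpow_nonneg hs0.le _)

lemma inv_img : (fun y : ℝ => y⁻¹) '' (Ioi 0) = Ioi 0 := by
  ext y
  constructor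
  · rintro ⟨z, hz, rfl⟩; exact mem_Ioi.mpr (inv_pos.mpr hz)
  · intro hy; exact ⟨y⁻¹, mem_Ioi.mpr (inv_pos.mpr hy), inv_inv y⟩

lemma inv_point (x a : ℝ) {s : ℝ} (hs : 0 < s) :
    |(-(s^2)⁻¹)| • ((s⁻¹) ^ (a - 1) * Real.exp (-(x/2) * (s⁻¹ + 1/s⁻¹)))
      = s ^ (-a - 1) * Real.exp (-(x/2) * (s + 1/s)) := by
  have harg : s⁻¹ + 1/s⁻¹ = s + 1/s := by
    rw [one_div, inv_inv, one_div]; ring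
  rw [smul_eq_mul, abs_neg, abs_inv, abs_of_nonneg (sq_nonneg s), harg,
    Real.inv_rpow hs.le, ← Real.rpow_neg hs.le, ← Real.rpow_natCast s 2,
    ← Real.rpow_neg hs.le, ← mul_assoc, ← Real.rpow_add hs]
  congr 2
  push_cast
  ring

lemma S_inv (x a : ℝ) :
    ∫ s in Ioi (0:ℝ), s ^ (a - 1) * Real.exp (-(x/2) * (s + 1/s))
      = ∫ s in Ioi (0:ℝ), s ^ (-a - 1) * Real.exp (-(x/2) * (s + 1/s)) := by
  have h := integral_image_eq_integral_abs_deriv_smul (f := fun y : ℝ => y⁻¹)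
    (f' := fun y : ℝ => -(y^2)⁻¹) measurableSet_Ioi
    (fun y hy => (hasDerivAt_inv (ne_of_gt hy)).hasDerivWithinAt)
    (fun y _ z _ hyz => inv_injective hyz)
    (fun s => s ^ (a - 1) * Real.exp (-(x/2) * (s + 1/s)))
  rw [inv_img] at h
  rw [h]
  exact setIntegral_congr_fun measurableSet_Ioi fun s hs => inv_point x a hs

lemma int_s_neg {a x : ℝ} (ha : 0 < a) (hx : 0 < x) :
    IntegrableOn (fun s : ℝ => s ^ (-a - 1) * Real.exp (-(x/2) * (s + 1/s))) (Ioi 0) := by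
  have h := integrableOn_image_iff_integrableOn_abs_deriv_smul (f := fun y : ℝ => y⁻¹)
    (f' := fun y : ℝ => -(y^2)⁻¹) measurableSet_Ioi
    (fun y hy => (hasDerivAt_inv (ne_of_gt hy)).hasDerivWithinAt)
    (fun y _ z _ hyz => inv_injective hyz)
    (fun s => s ^ (-a - 1) * Real.exp (-(x/2) * (s + 1/s)))
  rw [inv_img] at h
  rw [h]
  refine (int_s ha hx).congr_fun (fun s hs => ?_) measurableSet_Ioi
  have hs0 : (0:ℝ) < s := hs
  rw [show a - 1 = -(-a) - 1 by ring]
  exact (inv_point x (-a) hs0).symm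

lemma rep (ν x : ℝ) (hν : 0 < ν) (hx : 0 < x) :
    ∫ u in Ioi (0:ℝ), u ^ (ν - 1) * Real.exp (-u - x^2/(4*u))
      = (x/2) ^ ν * (2 * besselK ν x) := by
  have hx2 : 0 < x/2 := by linarith
  have hsplit : (∫ s in Ioi (0:ℝ), ((s ^ (ν - 1) + s ^ (-ν - 1))/2) * Real.exp (-(x/2) * (s + 1/s)))
      = ((∫ s in Ioi (0:ℝ), s ^ (ν - 1) * Real.exp (-(x/2) * (s + 1/s)))
        + ∫ s in Ioi (0:ℝ), s ^ (-ν - 1) * Real.exp (-(x/2) * (s + 1/s)))/2 := by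
    have e : EqOn (fun s : ℝ => ((s ^ (ν - 1) + s ^ (-ν - 1))/2) * Real.exp (-(x/2) * (s + 1/s)))
        (fun s : ℝ => (s ^ (ν - 1) * Real.exp (-(x/2) * (s + 1/s)))/2
          + (s ^ (-ν - 1) * Real.exp (-(x/2) * (s + 1/s)))/2) (Ioi 0) := by
      intro s _; dsimp only; ring
    rw [setIntegral_congr_fun measurableSet_Ioi e,
      integral_add ((int_s hν hx).div_const 2) ((int_s_neg hν hx).div_const 2),
      integral_div, integral_div]
    ring
  have hS : 2 * besselK ν x
      = ∫ s in Ioi (0:ℝ), s ^ (ν - 1) * Real.exp (-(x/2) * (s + 1/s)) := by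
    rw [← two_besselK, exp_subst, hsplit, ← S_inv]
    ring
  have hlin := integral_comp_mul_left_Ioi
      (fun u : ℝ => u ^ (ν - 1) * Real.exp (-u - x^2/(4*u))) 0 hx2
  rw [mul_zero] at hlin
  have hpt : EqOn (fun s : ℝ => (x/2*s) ^ (ν - 1) * Real.exp (-(x/2*s) - x^2/(4*(x/2*s))))
      (fun s : ℝ => (x/2)^(ν - 1) * (s^(ν - 1) * Real.exp (-(x/2) * (s + 1/s)))) (Ioi 0) := by
    intro s hs
    have hs0 : (0:ℝ) < s := hs
    dsimp only
    rw [Real.mul_rpow hx2.le hs0.le,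
      show -(x/2*s) - x^2/(4*(x/2*s)) = -(x/2) * (s + 1/s) by field_simp; ring]
    ring
  rw [setIntegral_congr_fun measurableSet_Ioi hpt, integral_const_mul, smul_eq_mul] at hlin
  beta_reduce at hlin
  have hpow := Real.rpow_add hx2 1 (ν - 1)
  rw [show (1:ℝ) + (ν - 1) = ν by ring, Real.rpow_one] at hpow
  have hJ : ∫ u in Ioi (0:ℝ), u ^ (ν - 1) * Real.exp (-u - x^2/(4*u))
      = (x/2) * ((x/2)^(ν - 1) * ∫ s in Ioi (0:ℝ), s^(ν - 1) * Real.exp (-(x/2) * (s + 1/s))) := by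
    rw [hlin, ← mul_assoc, mul_inv_cancel₀ (ne_of_gt hx2), one_mul]
  rw [hJ, ← hS, hpow]
  ring

lemma matern_eq {ν β r : ℝ} (hν : 0 < ν) (hβ : 0 < β) (hr : 0 ≤ r) :
    matern ν (β/(2*Real.sqrt ν)) r
      = (Real.Gamma ν)⁻¹
        * ∫ u in Ioi (0:ℝ), u ^ (ν - 1) * Real.exp (-u) * Real.exp (-(ν*(r^2/β^2))/u) := by
  have hsν : 0 < Real.sqrt ν := Real.sqrt_pos.mpr hν
  have hb : 0 < β/(2*Real.sqrt ν) := by positivity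
  have hΓ : 0 < Real.Gamma ν := Real.Gamma_pos_of_pos hν
  rcases eq_or_lt_of_le hr with h0 | hr0
  · rw [matern, if_pos h0.symm]
    have e : EqOn (fun u : ℝ => u ^ (ν - 1) * Real.exp (-u) * Real.exp (-(ν*(r^2/β^2))/u))
        (fun u : ℝ => u ^ (ν - 1) * Real.exp (-u)) (Ioi 0) := by
      intro u _
      rw [← h0]
      norm_num
    rw [setIntegral_congr_fun measurableSet_Ioi e, int_gamma_eq hν,
      inv_mul_cancel₀ (ne_of_gt hΓ)]
  · rw [matern, if_neg (ne_of_gt hr0)]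
    set z := r / (β/(2*Real.sqrt ν)) with hzdef
    have hz0 : 0 < z := div_pos hr0 hb
    have hz2 : z^2 = 4*(ν*(r^2/β^2)) := by
      rw [hzdef, div_div_eq_mul_div, div_pow, mul_pow, mul_pow, Real.sq_sqrt hν.le]
      ring
    have hrep := rep ν z hν hz0
    have key : (2:ℝ)^(1 - ν)/Real.Gamma ν * z ^ ν * besselK ν z
        = (Real.Gamma ν)⁻¹ * ((z/2)^ν * (2 * besselK ν z)) := by
      rw [Real.div_rpow hz0.le (by norm_num : (0:ℝ) ≤ 2),
        Real.rpow_sub (by norm_num : (0:ℝ) < 2), Real.rpow_one]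
      field_simp
    rw [key, ← hrep]
    congr 1
    refine setIntegral_congr_fun measurableSet_Ioi fun u hu => ?_
    have hu0 : (0:ℝ) < u := hu
    rw [mul_assoc, ← Real.exp_add]
    congr 1
    rw [hz2]
    field_simp
    ring

lemma key_est {ν c C ε : ℝ} (hν : 3 ≤ ν) (hc : 0 ≤ c) (hcC : c ≤ C) (hε : 0 < ε) :
    |(Real.Gamma ν)⁻¹
        * (∫ u in Ioi (0:ℝ), u ^ (ν - 1) * Real.exp (-u) * Real.exp (-(ν*c)/u))
      - Real.exp (-c)|
      ≤ C/(2*ε) * ((ν+2)/((ν-1)*(ν-2)) + ε^2) := by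
  have hν0 : (0:ℝ) < ν := by linarith
  have hν1 : (0:ℝ) < ν - 1 := by linarith
  have hν2 : (0:ℝ) < ν - 2 := by linarith
  have hΓ : 0 < Real.Gamma ν := Real.Gamma_pos_of_pos hν0
  have hΓ1 : 0 < Real.Gamma (ν - 1) := Real.Gamma_pos_of_pos hν1
  have hΓ2 : 0 < Real.Gamma (ν - 2) := Real.Gamma_pos_of_pos hν2
  have hC : 0 ≤ C := hc.trans hcC
  have hcont : ContinuousOn (fun u : ℝ => u ^ (ν - 1) * Real.exp (-u) * Real.exp (-(ν*c)/u))
      (Ioi 0) := by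
    refine ContinuousOn.mul (ContinuousOn.mul ?_ ?_) ?_
    · exact continuousOn_id.rpow_const fun u hu => Or.inl (ne_of_gt hu)
    · exact Real.continuous_exp.comp_continuousOn continuousOn_id.neg
    · exact Real.continuous_exp.comp_continuousOn
        (continuousOn_const.div continuousOn_id fun u hu => ne_of_gt hu)
  have intφ : IntegrableOn (fun u : ℝ => u ^ (ν - 1) * Real.exp (-u) * Real.exp (-(ν*c)/u))
      (Ioi 0) := by
    refine (int_gamma hν0).mono' (hcont.aestronglyMeasurable measurableSet_Ioi) ?_
    filter_upwards [ae_restrict_mem measurableSet_Ioi] with u hu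
    have hu0 : (0:ℝ) < u := hu
    rw [Real.norm_eq_abs, abs_of_nonneg (by positivity)]
    refine mul_le_of_le_one_right (by positivity) (Real.exp_le_one_iff.mpr ?_)
    exact div_nonpos_of_nonpos_of_nonneg (by nlinarith) hu0.le
  have i32 : IntegrableOn (fun u : ℝ =>
      ν^2*(u ^ (ν - 2 - 1) * Real.exp (-u)) - 2*ν*(u ^ (ν - 1 - 1) * Real.exp (-u)))
      (Ioi 0) :=
    ((int_gamma hν2).const_mul (ν^2)).sub ((int_gamma hν1).const_mul (2*ν))
  have hcomb : IntegrableOn (fun u : ℝ =>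
      ν^2*(u ^ (ν - 2 - 1) * Real.exp (-u)) - 2*ν*(u ^ (ν - 1 - 1) * Real.exp (-u))
        + (1+ε^2)*(u ^ (ν - 1) * Real.exp (-u))) (Ioi 0) :=
    i32.add ((int_gamma hν0).const_mul (1+ε^2))
  have hcombval : ∫ u in Ioi (0:ℝ),
      (ν^2*(u ^ (ν - 2 - 1) * Real.exp (-u)) - 2*ν*(u ^ (ν - 1 - 1) * Real.exp (-u))
        + (1+ε^2)*(u ^ (ν - 1) * Real.exp (-u)))
      = ν^2*Real.Gamma (ν - 2) - 2*ν*Real.Gamma (ν - 1) + (1+ε^2)*Real.Gamma ν := by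
    rw [integral_add i32 ((int_gamma hν0).const_mul (1+ε^2)),
      integral_sub ((int_gamma hν2).const_mul (ν^2)) ((int_gamma hν1).const_mul (2*ν)),
      integral_const_mul, integral_const_mul, integral_const_mul,
      int_gamma_eq hν2, int_gamma_eq hν1, int_gamma_eq hν0]
  have e1 : ∀ u : ℝ, u ∈ Ioi (0:ℝ) →
      u ^ (ν - 1) * Real.exp (-u) * ((ν/u - 1)^2 + ε^2)
      = ν^2*(u ^ (ν - 2 - 1) * Real.exp (-u)) - 2*ν*(u ^ (ν - 1 - 1) * Real.exp (-u))
        + (1+ε^2)*(u ^ (ν - 1) * Real.exp (-u)) := by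
    intro u hu
    have hu0 : (0:ℝ) < u := hu
    have q1 : u ^ (ν - 1 - 1) = u ^ (ν - 1) / u := by
      rw [Real.rpow_sub hu0, Real.rpow_one]
    have q2 : u ^ (ν - 2 - 1) = u ^ (ν - 1) / u^2 := by
      rw [show ν - 2 - 1 = ν - 1 - 2 by ring, Real.rpow_sub hu0,
        show (2:ℝ) = ((2:ℕ):ℝ) by norm_num, Real.rpow_natCast]
    rw [q1, q2]
    field_simp
    ring
  have hdiff : (Real.Gamma ν)⁻¹
        * (∫ u in Ioi (0:ℝ), u ^ (ν - 1) * Real.exp (-u) * Real.exp (-(ν*c)/u))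
        - Real.exp (-c)
      = (Real.Gamma ν)⁻¹ * ∫ u in Ioi (0:ℝ),
          (u ^ (ν - 1) * Real.exp (-u) * Real.exp (-(ν*c)/u)
            - Real.exp (-c) * (u ^ (ν - 1) * Real.exp (-u))) := by
    rw [integral_sub intφ ((int_gamma hν0).const_mul _), integral_const_mul, int_gamma_eq hν0]
    field_simp
  rw [hdiff, abs_mul, abs_of_nonneg (inv_nonneg.mpr hΓ.le)]
  have hBint : IntegrableOn (fun u : ℝ =>
      C/(2*ε) * (u ^ (ν - 1) * Real.exp (-u) * ((ν/u - 1)^2 + ε^2))) (Ioi 0) := by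
    have h' : IntegrableOn (fun u : ℝ =>
        C/(2*ε) * (ν^2*(u ^ (ν - 2 - 1) * Real.exp (-u)) - 2*ν*(u ^ (ν - 1 - 1) * Real.exp (-u))
          + (1+ε^2)*(u ^ (ν - 1) * Real.exp (-u)))) (Ioi 0) := hcomb.const_mul (C/(2*ε))
    refine h'.congr_fun (fun u hu => ?_) measurableSet_Ioi
    dsimp only
    rw [e1 u hu]
  have hbound : |∫ u in Ioi (0:ℝ),
        (u ^ (ν - 1) * Real.exp (-u) * Real.exp (-(ν*c)/u)
          - Real.exp (-c) * (u ^ (ν - 1) * Real.exp (-u)))|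
      ≤ ∫ u in Ioi (0:ℝ),
          C/(2*ε) * (u ^ (ν - 1) * Real.exp (-u) * ((ν/u - 1)^2 + ε^2)) := by
    rw [← Real.norm_eq_abs]
    refine norm_integral_le_of_norm_le hBint ?_
    filter_upwards [ae_restrict_mem measurableSet_Ioi] with u hu
    have hu0 : (0:ℝ) < u := hu
    rw [Real.norm_eq_abs,
      show u ^ (ν - 1) * Real.exp (-u) * Real.exp (-(ν*c)/u)
          - Real.exp (-c) * (u ^ (ν - 1) * Real.exp (-u))
        = (u ^ (ν - 1) * Real.exp (-u)) * (Real.exp (-(ν*c)/u) - Real.exp (-c)) by ring,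
      abs_mul, abs_of_nonneg (by positivity : (0:ℝ) ≤ u ^ (ν - 1) * Real.exp (-u))]
    have h1 : |Real.exp (-(ν*c)/u) - Real.exp (-c)| ≤ |ν*c/u - c| := by
      rw [neg_div]
      exact abs_exp_sub_exp (by positivity) hc
    have h2 : |ν*c/u - c| = c * |ν/u - 1| := by
      rw [show ν*c/u - c = c * (ν/u - 1) by ring, abs_mul, abs_of_nonneg hc]
    have h3 : c * |ν/u - 1| ≤ C * (((ν/u - 1)^2 + ε^2)/(2*ε)) := by
      have habs : |ν/u - 1| ≤ ((ν/u - 1)^2 + ε^2)/(2*ε) := by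
        rw [le_div_iff₀ (by positivity)]
        nlinarith [sq_nonneg (|ν/u - 1| - ε), sq_abs (ν/u - 1), abs_nonneg (ν/u - 1)]
      exact mul_le_mul hcC habs (abs_nonneg _) hC
    refine le_trans (mul_le_mul_of_nonneg_left (h1.trans (h2.le.trans h3))
      (by positivity : (0:ℝ) ≤ u ^ (ν - 1) * Real.exp (-u))) (le_of_eq ?_)
    ring
  have hBval : ∫ u in Ioi (0:ℝ),
        C/(2*ε) * (u ^ (ν - 1) * Real.exp (-u) * ((ν/u - 1)^2 + ε^2))
      = C/(2*ε) * (ν^2*Real.Gamma (ν - 2) - 2*ν*Real.Gamma (ν - 1) + (1+ε^2)*Real.Gamma ν) := by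
    rw [integral_const_mul, setIntegral_congr_fun measurableSet_Ioi (fun u hu => e1 u hu), hcombval]
  have hG1 : Real.Gamma ν = (ν - 1)*Real.Gamma (ν - 1) := by
    have h := Real.Gamma_add_one (ne_of_gt hν1)
    rw [show ν - 1 + 1 = ν by ring] at h
    exact h
  have hG2 : Real.Gamma (ν - 1) = (ν - 2)*Real.Gamma (ν - 2) := by
    have h := Real.Gamma_add_one (ne_of_gt hν2)
    rw [show ν - 2 + 1 = ν - 1 by ring] at h
    exact h
  calc (Real.Gamma ν)⁻¹ * |∫ u in Ioi (0:ℝ),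
        (u ^ (ν - 1) * Real.exp (-u) * Real.exp (-(ν*c)/u)
          - Real.exp (-c) * (u ^ (ν - 1) * Real.exp (-u)))|
      ≤ (Real.Gamma ν)⁻¹ * ∫ u in Ioi (0:ℝ),
          C/(2*ε) * (u ^ (ν - 1) * Real.exp (-u) * ((ν/u - 1)^2 + ε^2)) :=
        mul_le_mul_of_nonneg_left hbound (inv_nonneg.mpr hΓ.le)
    _ = C/(2*ε) * ((ν+2)/((ν-1)*(ν-2)) + ε^2) := by
        rw [hBval, hG1, hG2]
        field_simp
        ring

theorem stmt_19 (β : ℝ) (hβ : 0 < β) (K : Set ℝ) (hK : IsCompact K)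
    (hK0 : K ⊆ Set.Ici 0) :
    TendstoUniformlyOn (fun ν r => matern ν (β / (2 * Real.sqrt ν)) r)
      (fun r => Real.exp (-r ^ 2 / β ^ 2)) Filter.atTop K := by
  rw [Metric.tendstoUniformlyOn_iff]
  intro ε hε
  obtain ⟨R, hR⟩ : ∃ R : ℝ, ∀ r ∈ K, r ≤ R :=
    hK.bddAbove.imp fun R h r hr => h hr
  set M : ℝ := max R 0 with hM
  set C : ℝ := M^2/β^2 with hCdef
  have hC : 0 ≤ C := by positivity
  set ε₀ : ℝ := ε/(2*(C+1)) with hε₀def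
  have hε₀ : 0 < ε₀ := by positivity
  have hδ : ∀ ν : ℝ, 4 ≤ ν → 8/ε₀^2 ≤ ν → (ν+2)/((ν-1)*(ν-2)) ≤ ε₀^2 := by
    intro ν h4 h8
    have hν1 : (0:ℝ) < ν - 1 := by linarith
    have hν2 : (0:ℝ) < ν - 2 := by linarith
    have h8' : 8 ≤ ν * ε₀^2 := by
      rw [div_le_iff₀ (by positivity)] at h8
      linarith
    rw [div_le_iff₀ (by positivity)]
    nlinarith [sq_nonneg ε₀, mul_pos hν1 hν2]
  filter_upwards [eventually_ge_atTop (4:ℝ), eventually_ge_atTop (8/ε₀^2)] with ν h4 h8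
  intro r hr
  have hr0 : 0 ≤ r := hK0 hr
  have hν3 : (3:ℝ) ≤ ν := by linarith
  have hcC : r^2/β^2 ≤ C := by
    rw [hCdef]
    have hrM : r ≤ M := le_trans (hR r hr) (le_max_left _ _)
    refine div_le_div_of_nonneg_right ?_ (by positivity)
    exact pow_le_pow_left₀ hr0 hrM 2
  have hkey := key_est (c := r^2/β^2) (C := C) (ε := ε₀) hν3 (by positivity) hcC hε₀
  rw [← matern_eq (by linarith : (0:ℝ) < ν) hβ hr0] at hkey
  rw [Real.dist_eq, abs_sub_comm, show -r^2/β^2 = -(r^2/β^2) by ring]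
  calc |matern ν (β/(2*Real.sqrt ν)) r - Real.exp (-(r^2/β^2))|
      ≤ C/(2*ε₀) * ((ν+2)/((ν-1)*(ν-2)) + ε₀^2) := hkey
    _ ≤ C/(2*ε₀) * (ε₀^2 + ε₀^2) := by
        refine mul_le_mul_of_nonneg_left ?_ (by positivity)
        have := hδ ν h4 h8
        linarith
    _ = C * ε₀ := by field_simp; ring
    _ < ε := by
        rw [hε₀def, mul_div_assoc']
        rw [div_lt_iff₀ (by positivity : (0:ℝ) < 2*(C+1))]
        nlinarith
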